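/- arXiv:2406.15898 — 7 statements merged into one kernel-verified Lean document; each statement's English description precedes it below -/
import Mathlib

section
/- Let 0 < q_l < q_h and define p_l* = q_l·(q_h − q_l)/(4·q_h − q_l) and p_h* = 2·q_h·(q_h − q_l)/(4·q_h − q_l). Then p_l* is the unique global maximizer over p ∈ ℝ of p·((p_h* − p)/(q_h − q_l) − p/q_l), and p_h* is the unique global maximizer over p ∈ ℝ of p·(1 − (p − p_l*)/(q_h − q_l)); moreover the resulting revenues satisfy p_l*·((p_h* − p_l*)/(q_h − q_l) − p_l*/q_l) = q_l·q_h·(q_h − q_l)/(4·q_h − q_l)² and p_h*·(1 − (p_h* − p_l*)/(q_h − q_l)) = 4·q_h²·(q_h − q_l)/(4·q_h − q_l)². -/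
/-- With `p_l* = q_l·(q_h − q_l)/(4·q_h − q_l)` and
`p_h* = 2·q_h·(q_h − q_l)/(4·q_h − q_l)`, each price is the unique global
maximizer of its firm's revenue given the other, and the equilibrium revenues
are `q_l·q_h·(q_h − q_l)/(4·q_h − q_l)²` and `4·q_h²·(q_h − q_l)/(4·q_h − q_l)²`. -/
theorem equilibrium_prices_and_utilities
    (ql qh : ℝ) (hql : 0 < ql) (hlh : ql < qh) :
    (∀ p : ℝ, p * (((2 * qh * (qh - ql) / (4 * qh - ql)) - p) / (qh - ql) - p / ql)
        ≤ (ql * (qh - ql) / (4 * qh - ql)) *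
          (((2 * qh * (qh - ql) / (4 * qh - ql)) - (ql * (qh - ql) / (4 * qh - ql))) / (qh - ql)
            - (ql * (qh - ql) / (4 * qh - ql)) / ql)) ∧
    (∀ p : ℝ, p * (((2 * qh * (qh - ql) / (4 * qh - ql)) - p) / (qh - ql) - p / ql)
        = (ql * (qh - ql) / (4 * qh - ql)) *
          (((2 * qh * (qh - ql) / (4 * qh - ql)) - (ql * (qh - ql) / (4 * qh - ql))) / (qh - ql)
            - (ql * (qh - ql) / (4 * qh - ql)) / ql)
        → p = ql * (qh - ql) / (4 * qh - ql)) ∧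
    (∀ p : ℝ, p * (1 - (p - (ql * (qh - ql) / (4 * qh - ql))) / (qh - ql))
        ≤ (2 * qh * (qh - ql) / (4 * qh - ql)) *
          (1 - ((2 * qh * (qh - ql) / (4 * qh - ql)) - (ql * (qh - ql) / (4 * qh - ql))) / (qh - ql))) ∧
    (∀ p : ℝ, p * (1 - (p - (ql * (qh - ql) / (4 * qh - ql))) / (qh - ql))
        = (2 * qh * (qh - ql) / (4 * qh - ql)) *
          (1 - ((2 * qh * (qh - ql) / (4 * qh - ql)) - (ql * (qh - ql) / (4 * qh - ql))) / (qh - ql))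
        → p = 2 * qh * (qh - ql) / (4 * qh - ql)) ∧
    (ql * (qh - ql) / (4 * qh - ql)) *
        (((2 * qh * (qh - ql) / (4 * qh - ql)) - (ql * (qh - ql) / (4 * qh - ql))) / (qh - ql)
          - (ql * (qh - ql) / (4 * qh - ql)) / ql)
      = ql * qh * (qh - ql) / (4 * qh - ql) ^ 2 ∧
    (2 * qh * (qh - ql) / (4 * qh - ql)) *
        (1 - ((2 * qh * (qh - ql) / (4 * qh - ql)) - (ql * (qh - ql) / (4 * qh - ql))) / (qh - ql))
      = 4 * qh ^ 2 * (qh - ql) / (4 * qh - ql) ^ 2 := by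
  have hd : (0:ℝ) < qh - ql := by linarith
  have hD : (0:ℝ) < 4 * qh - ql := by linarith
  have hqh : (0:ℝ) < qh := by linarith
  have hd' := hd.ne'
  have hD' := hD.ne'
  have hql' := hql.ne'
  have key1 : ∀ p : ℝ,
      (ql * (qh - ql) / (4 * qh - ql)) *
          (((2 * qh * (qh - ql) / (4 * qh - ql)) - (ql * (qh - ql) / (4 * qh - ql))) / (qh - ql)
            - (ql * (qh - ql) / (4 * qh - ql)) / ql)
        - p * (((2 * qh * (qh - ql) / (4 * qh - ql)) - p) / (qh - ql) - p / ql)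
      = (qh / ((qh - ql) * ql)) * (p - ql * (qh - ql) / (4 * qh - ql)) ^ 2 := by
    intro p
    have hD4 : qh * 4 - ql ≠ 0 := by rw [mul_comm]; exact hD'
    field_simp
    ring
  have key2 : ∀ p : ℝ,
      (2 * qh * (qh - ql) / (4 * qh - ql)) *
          (1 - ((2 * qh * (qh - ql) / (4 * qh - ql)) - (ql * (qh - ql) / (4 * qh - ql))) / (qh - ql))
        - p * (1 - (p - (ql * (qh - ql) / (4 * qh - ql))) / (qh - ql))
      = (1 / (qh - ql)) * (p - 2 * qh * (qh - ql) / (4 * qh - ql)) ^ 2 := by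
    intro p
    have hD4 : qh * 4 - ql ≠ 0 := by rw [mul_comm]; exact hD'
    field_simp
    ring
  have c1 : (0:ℝ) < qh / ((qh - ql) * ql) := by positivity
  have c2 : (0:ℝ) < 1 / (qh - ql) := by positivity
  refine ⟨fun p => ?_, fun p hp => ?_, fun p => ?_, fun p hp => ?_, ?_, ?_⟩
  · nlinarith [key1 p, sq_nonneg (p - ql * (qh - ql) / (4 * qh - ql)),
      mul_nonneg c1.le (sq_nonneg (p - ql * (qh - ql) / (4 * qh - ql)))]
  · have h := key1 p
    rw [hp, sub_self] at h
    have : (p - ql * (qh - ql) / (4 * qh - ql)) ^ 2 = 0 := by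
      by_contra hne
      have : (0:ℝ) < (p - ql * (qh - ql) / (4 * qh - ql)) ^ 2 :=
        lt_of_le_of_ne (sq_nonneg _) (Ne.symm hne)
      nlinarith
    have := pow_eq_zero_iff (n := 2) (by norm_num) |>.mp this
    linarith [sub_eq_zero.mp this]
  · nlinarith [key2 p, mul_nonneg c2.le (sq_nonneg (p - 2 * qh * (qh - ql) / (4 * qh - ql)))]
  · have h := key2 p
    rw [hp, sub_self] at h
    have : (p - 2 * qh * (qh - ql) / (4 * qh - ql)) ^ 2 = 0 := by
      by_contra hne
      have : (0:ℝ) < (p - 2 * qh * (qh - ql) / (4 * qh - ql)) ^ 2 :=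
        lt_of_le_of_ne (sq_nonneg _) (Ne.symm hne)
      nlinarith
    have := pow_eq_zero_iff (n := 2) (by norm_num) |>.mp this
    linarith [sub_eq_zero.mp this]
  · field_simp
    ring
  · have hD4 : qh * 4 - ql ≠ 0 := by rw [mul_comm]; exact hD'
    field_simp
    ring
end

section
/- Let q_h > 0 be fixed. Then the function q_l ↦ 4·q_h²·(q_h − q_l)/(4·q_h − q_l)² is monotone nonincreasing on the interval [0, q_h]. -/
/-- For fixed `q_h > 0`, the high-quality firm's equilibrium
utility `q_l ↦ 4·q_h²·(q_h − q_l)/(4·q_h − q_l)²` is monotone nonincreasing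
on `[0, q_h]`. -/
theorem Uh_antitone_in_ql (qh : ℝ) (hqh : 0 < qh) :
    AntitoneOn (fun ql : ℝ => 4 * qh ^ 2 * (qh - ql) / (4 * qh - ql) ^ 2)
      (Set.Icc 0 qh) := by
  intro a ha b hb hab
  simp only
  have ha2 : (0:ℝ) < 4 * qh - a := by
    have := ha.2; linarith
  have hb2 : (0:ℝ) < 4 * qh - b := by
    have := hb.2; linarith
  rw [div_le_div_iff₀ (by positivity) (by positivity)]
  have key : 0 ≤ 8 * qh ^ 2 + qh * (a + b) - a * b := by
    nlinarith [mul_le_mul ha.2 hb.2 hb.1 hqh.le, mul_nonneg ha.1 hqh.le, mul_nonneg hb.1 hqh.le]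
  nlinarith [mul_nonneg (mul_nonneg (by positivity : (0:ℝ) ≤ 4 * qh ^ 2) (sub_nonneg.2 hab)) key]
end

section
/- Let q_l > 0 be fixed. Then the function q_h ↦ q_l·q_h·(q_h − q_l)/(4·q_h − q_l)² is monotone nondecreasing on the interval [q_l, ∞). -/
/-- For fixed `q_l > 0`, the low-quality firm's equilibrium
utility `q_h ↦ q_l·q_h·(q_h − q_l)/(4·q_h − q_l)²` is monotone nondecreasing
on `[q_l, ∞)`. -/
theorem Ul_monotone_in_qh (ql : ℝ) (hql : 0 < ql) :
    MonotoneOn (fun qh : ℝ => ql * qh * (qh - ql) / (4 * qh - ql) ^ 2)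
      (Set.Ici ql) := by
  intro a ha b hb hab
  simp only [Set.mem_Ici] at ha hb
  have hda : 0 < (4 * a - ql) ^ 2 := by nlinarith
  have hdb : 0 < (4 * b - ql) ^ 2 := by nlinarith
  rw [div_le_div_iff₀ hda hdb]
  nlinarith [mul_nonneg (mul_nonneg hql.le (sub_nonneg.2 hab))
    (by nlinarith : (0:ℝ) ≤ 8 * a * b + ql * (a + b) - ql ^ 2)]
end

section
/- Let q_h > 0 be fixed. Then the function q_l ↦ q_l·q_h·(q_h − q_l)/(4·q_h − q_l)² is monotone nondecreasing on the interval [0, (4/7)·q_h] and monotone nonincreasing on the interval [(4/7)·q_h, q_h]. -/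
/-- For fixed `q_h > 0`, the low-quality firm's equilibrium
utility `q_l ↦ q_l·q_h·(q_h − q_l)/(4·q_h − q_l)²` is monotone nondecreasing
on `[0, (4/7)·q_h]` and monotone nonincreasing on `[(4/7)·q_h, q_h]`. -/
theorem Ul_unimodal_in_ql (qh : ℝ) (hqh : 0 < qh) :
    MonotoneOn (fun ql : ℝ => ql * qh * (qh - ql) / (4 * qh - ql) ^ 2)
      (Set.Icc 0 (4 / 7 * qh)) ∧
    AntitoneOn (fun ql : ℝ => ql * qh * (qh - ql) / (4 * qh - ql) ^ 2)
      (Set.Icc (4 / 7 * qh) qh) := by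
  constructor
  · intro a ha b hb hab
    simp only [Set.mem_Icc] at ha hb
    have hda : (0:ℝ) < (4 * qh - a) ^ 2 := by nlinarith
    have hdb : (0:ℝ) < (4 * qh - b) ^ 2 := by nlinarith
    rw [div_le_div_iff₀ hda hdb]
    have hg : 0 ≤ 16 * qh ^ 2 + 7 * a * b - 16 * qh * (a + b) := by
      nlinarith [mul_nonneg (by linarith : (0:ℝ) ≤ 4 * qh - 7 * a)
          (by linarith : (0:ℝ) ≤ 4 * qh - 7 * b),
        mul_nonneg hqh.le (by linarith : (0:ℝ) ≤ 8 * qh - 7 * (a + b))]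
    nlinarith [mul_nonneg (mul_nonneg (sub_nonneg.2 hab) hqh.le) hg]
  · intro a ha b hb hab
    simp only [Set.mem_Icc] at ha hb
    have hda : (0:ℝ) < (4 * qh - a) ^ 2 := by nlinarith
    have hdb : (0:ℝ) < (4 * qh - b) ^ 2 := by nlinarith
    rw [div_le_div_iff₀ hdb hda]
    have hg : 16 * qh ^ 2 + 7 * a * b - 16 * qh * (a + b) ≤ 0 := by
      nlinarith [mul_nonneg (by linarith : (0:ℝ) ≤ qh - a)
          (by linarith : (0:ℝ) ≤ 7 * b - 4 * qh),
        mul_nonneg (by linarith : (0:ℝ) ≤ b)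
          (by linarith : (0:ℝ) ≤ 7 * a - 4 * qh)]
    nlinarith [mul_nonneg (mul_nonneg (sub_nonneg.2 hab) hqh.le) (neg_nonneg.2 hg)]
end

section
/- Let 0 < q_{l,0} ≤ q_{h,0} and set U_{l,0} = U_l(q_{l,0}, q_{h,0}) and U_{h,0} = U_h(q_{l,0}, q_{h,0}). Suppose 0 < q_l ≤ q_h ≤ q_h′ and that U_l(q_l, q_h) ≥ U_{l,0} and U_h(q_l, q_h) ≥ U_{h,0}. Then U_l(q_l, q_h′) ≥ U_{l,0}, U_h(q_l, q_h′) ≥ U_{h,0}, and (U_l(q_l, q_h′) − U_{l,0})·(U_h(q_l, q_h′) − U_{h,0}) ≥ (U_l(q_l, q_h) − U_{l,0})·(U_h(q_l, q_h) − U_{h,0}). In particular, the Nash bargaining objective restricted to the feasible set can never be decreased by increasing q_h, so any maximizer of the Nash bargaining problem has q_h equal to the maximal attainable quality. -/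
/-- Low-quality firm's equilibrium utility. -/
noncomputable def Ul (ql qh : ℝ) : ℝ := ql * qh * (qh - ql) / (4 * qh - ql) ^ 2

/-- High-quality firm's equilibrium utility. -/
noncomputable def Uh (ql qh : ℝ) : ℝ := 4 * qh ^ 2 * (qh - ql) / (4 * qh - ql) ^ 2

lemma Ul_mono {ql a b : ℝ} (hql : 0 < ql) (hla : ql ≤ a) (hab : a ≤ b) :
    Ul ql a ≤ Ul ql b := by
  have ha : 0 < 4 * a - ql := by linarith
  have hb : 0 < 4 * b - ql := by linarith
  unfold Ul
  rw [div_le_div_iff₀ (by positivity) (by positivity)]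
  nlinarith [mul_nonneg (sub_nonneg.2 hab) hql.le, sq_nonneg (a - b), sq_nonneg (a + b),
    mul_pos hql (lt_of_lt_of_le hql hla), mul_nonneg (mul_nonneg (sub_nonneg.2 hab) hql.le) (sub_nonneg.2 hla),
    mul_nonneg (mul_nonneg (sub_nonneg.2 hab) hql.le) hql.le,
    mul_nonneg (mul_nonneg (mul_nonneg (sub_nonneg.2 hab) hql.le) hql.le) (le_trans hql.le hla),
    mul_nonneg (mul_nonneg (mul_nonneg (sub_nonneg.2 hab) hql.le) hql.le) hql.le]

lemma Uh_mono {ql a b : ℝ} (hql : 0 < ql) (hla : ql ≤ a) (hab : a ≤ b) :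
    Uh ql a ≤ Uh ql b := by
  have ha : 0 < 4 * a - ql := by linarith
  have hb : 0 < 4 * b - ql := by linarith
  have ha0 : 0 < a := lt_of_lt_of_le hql hla
  have hb0 : 0 < b := lt_of_lt_of_le ha0 hab
  have h1 : 0 ≤ a - ql := by linarith
  have h2 : 0 ≤ b - ql := by linarith
  have hd : 0 ≤ b - a := by linarith
  unfold Uh
  rw [div_le_div_iff₀ (by positivity) (by positivity)]
  have key : 0 ≤ (b - a) * (8*a^2*b*(b-ql) + 8*a*b^2*(a-ql) + ql^2*a*(a-ql)
      + ql^2*b*(b-ql) + 9*a*b*ql^2) := by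
    apply mul_nonneg hd
    have t1 : 0 ≤ 8*a^2*b*(b-ql) := by positivity
    have t2 : 0 ≤ 8*a*b^2*(a-ql) := by positivity
    have t3 : 0 ≤ ql^2*a*(a-ql) := by positivity
    have t4 : 0 ≤ ql^2*b*(b-ql) := by positivity
    have t5 : 0 ≤ 9*a*b*ql^2 := by positivity
    linarith
  nlinarith [key]

/-- increasing `q_h` keeps the point feasible for the Nash
bargaining problem and never decreases the Nash bargaining objective. -/
theorem nash_objective_increasing_in_qh
    (ql0 qh0 ql qh qh' : ℝ)
    (hql0 : 0 < ql0) (h0 : ql0 ≤ qh0)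
    (hql : 0 < ql) (hlh : ql ≤ qh) (hhh : qh ≤ qh')
    (hUl : Ul ql qh ≥ Ul ql0 qh0) (hUh : Uh ql qh ≥ Uh ql0 qh0) :
    Ul ql qh' ≥ Ul ql0 qh0 ∧
    Uh ql qh' ≥ Uh ql0 qh0 ∧
    (Ul ql qh' - Ul ql0 qh0) * (Uh ql qh' - Uh ql0 qh0)
      ≥ (Ul ql qh - Ul ql0 qh0) * (Uh ql qh - Uh ql0 qh0) := by
  have h1 : Ul ql qh ≤ Ul ql qh' := Ul_mono hql hlh hhh
  have h2 : Uh ql qh ≤ Uh ql qh' := Uh_mono hql hlh hhh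
  refine ⟨le_trans hUl h1, le_trans hUh h2, ?_⟩
  have a1 : (0:ℝ) ≤ Ul ql qh - Ul ql0 qh0 := by linarith
  have a2 : (0:ℝ) ≤ Uh ql qh - Uh ql0 qh0 := by linarith
  exact mul_le_mul (by linarith) (by linarith) a2 (by linarith)
end

section
/- Let 0 < q_{l,0} < q_{h,0} ≤ q_h, set ρ = q_{l,0}/q_{h,0}, and define q̂ = B(ρ, q_h/q_{h,0})·q_h, where B(a, b) = 4 − ((4 − a)²/(2·(1 − a)))·(b − √(b² − 12·(1 − a)·b/(4 − a)²)). Then for every q_l with q_{l,0} ≤ q_l ≤ q̂ and q_l ≤ q_h, neither firm's equilibrium revenue decreases: U_l(q_l, q_h) ≥ U_l(q_{l,0}, q_{h,0}) and U_h(q_l, q_h) ≥ U_h(q_{l,0}, q_{h,0}). -/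
/-- The quality-ratio bound function of the defection-free scheme. -/
noncomputable def B (a b : ℝ) : ℝ :=
  4 - ((4 - a) ^ 2 / (2 * (1 - a))) *
    (b - Real.sqrt (b ^ 2 - 12 * (1 - a) * b / (4 - a) ^ 2))

/-- Key consequence of `x ≤ B ρ b`: the high-quality revenue condition
`(1-ρ)(4-x)² ≤ b(4-ρ)²(1-x)` in normalized variables. -/
lemma keyK (ρ b x : ℝ) (hρ0 : 0 < ρ) (hρ1 : ρ < 1) (hb : 1 ≤ b)
    (hx0 : 0 < x) (hxB : x ≤ B ρ b) :
    (1 - ρ) * (4 - x) ^ 2 ≤ b * (4 - ρ) ^ 2 * (1 - x) := by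
  have hA16 : 16 * (1 - ρ) ≤ (4 - ρ) ^ 2 := by nlinarith
  have he : (0:ℝ) < 1 - ρ := by linarith
  have hA0 : (0:ℝ) < (4 - ρ) ^ 2 := by nlinarith
  set D := b ^ 2 - 12 * (1 - ρ) * b / (4 - ρ) ^ 2 with hD
  have h12 : 12 * (1 - ρ) * b / (4 - ρ) ^ 2 ≤ b := by
    rw [div_le_iff₀ hA0]; nlinarith
  have hD0 : 0 ≤ D := by rw [hD]; nlinarith
  have hs0 : 0 ≤ Real.sqrt D := Real.sqrt_nonneg D
  have hs2 : Real.sqrt D ^ 2 = D := Real.sq_sqrt hD0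
  set s := Real.sqrt D with hs
  unfold B at hxB
  rw [← hD, ← hs] at hxB
  have h1 : (4 - ρ) ^ 2 / (2 * (1 - ρ)) * (b - s) ≤ 4 - x := by linarith
  rw [div_mul_eq_mul_div, div_le_iff₀ (by linarith : (0:ℝ) < 2 * (1 - ρ))] at h1
  have h2 : (4 - ρ) ^ 2 * b - 2 * (1 - ρ) * (4 - x) ≤ (4 - ρ) ^ 2 * s := by nlinarith
  have hpos : (0:ℝ) < (4 - ρ) ^ 2 * b - 2 * (1 - ρ) * (4 - x) := by nlinarith
  have hsq : ((4 - ρ) ^ 2 * b - 2 * (1 - ρ) * (4 - x)) ^ 2 ≤ ((4 - ρ) ^ 2) ^ 2 * s ^ 2 := by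
    nlinarith [mul_le_mul h2 h2 (le_of_lt hpos) (by positivity : (0:ℝ) ≤ (4 - ρ) ^ 2 * s)]
  have hident : ((4 - ρ) ^ 2) ^ 2 * D
      = ((4 - ρ) ^ 2) ^ 2 * b ^ 2 - 12 * (1 - ρ) * b * (4 - ρ) ^ 2 := by
    rw [hD, mul_sub (((4 - ρ) ^ 2) ^ 2)]; congr 1; rw [mul_div_assoc', div_eq_iff hA0.ne']; ring
  rw [hs2, hident] at hsq
  have h4 : 4 * (1 - ρ) * ((1 - ρ) * (4 - x) ^ 2)
      ≤ 4 * (1 - ρ) * (b * (4 - ρ) ^ 2 * (1 - x)) := by nlinarith [hsq]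
  exact le_of_mul_le_mul_left h4 (by linarith)

/-- with `ρ = q_{l,0}/q_{h,0}` and `q̂ = B(ρ, q_h/q_{h,0})·q_h`,
any improvement of the low-quality firm to `q_l ∈ [q_{l,0}, q̂]` with
`q_l ≤ q_h` leaves both firms' equilibrium revenues no lower than initially. -/
theorem no_revenue_loss_below_threshold
    (ql0 qh0 qh : ℝ) (hql0 : 0 < ql0) (h0 : ql0 < qh0) (hh : qh0 ≤ qh) :
    ∀ ql : ℝ, ql0 ≤ ql → ql ≤ B (ql0 / qh0) (qh / qh0) * qh → ql ≤ qh →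
      Ul ql qh ≥ Ul ql0 qh0 ∧ Uh ql qh ≥ Uh ql0 qh0 := by
  intro ql h1 h2 h3
  have hqh0 : (0:ℝ) < qh0 := by linarith
  have hqh : (0:ℝ) < qh := by linarith
  have hql : (0:ℝ) < ql := by linarith
  have hd0 : (0:ℝ) < 4 * qh0 - ql0 := by linarith
  have hd : (0:ℝ) < 4 * qh - ql := by linarith
  have hK := keyK (ql0 / qh0) (qh / qh0) (ql / qh)
    (by positivity) ((div_lt_one hqh0).mpr h0) ((one_le_div hqh0).mpr hh)
    (by positivity) ((div_le_iff₀ hqh).mpr h2)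
  have hKp : (qh0 - ql0) * (4 * qh - ql) ^ 2 * qh0 ^ 2
      ≤ (qh - ql) * (4 * qh0 - ql0) ^ 2 * qh ^ 2 := by
    have h := mul_le_mul_of_nonneg_left hK (show (0:ℝ) ≤ qh0 ^ 3 * qh ^ 2 by positivity)
    have e1 : qh0 ^ 3 * qh ^ 2 * ((1 - ql0 / qh0) * (4 - ql / qh) ^ 2)
        = (qh0 - ql0) * (4 * qh - ql) ^ 2 * qh0 ^ 2 := by
      field_simp
    have e2 : qh0 ^ 3 * qh ^ 2 * (qh / qh0 * (4 - ql0 / qh0) ^ 2 * (1 - ql / qh))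
        = (qh - ql) * (4 * qh0 - ql0) ^ 2 * qh ^ 2 := by
      field_simp
    rw [e1, e2] at h
    exact h
  constructor
  · -- Ul
    unfold Ul
    rw [ge_iff_le, div_le_div_iff₀ (by positivity) (by positivity)]
    rcases le_or_gt (ql * qh0) (ql0 * qh) with hcase | hcase
    · -- x ≤ ρ : monotonicity, no K needed
      have hg : qh0 * ((qh0 - ql0) * (4 * qh - ql) ^ 2)
          ≤ qh * ((qh - ql) * (4 * qh0 - ql0) ^ 2) := by
        nlinarith [mul_nonneg (by nlinarith : (0:ℝ) ≤ ql0 * qh - ql * qh0)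
          (by nlinarith : (0:ℝ) ≤ 8 * qh * qh0 + ql0 * qh + ql * qh0 - ql0 * ql)]
      have h5 := mul_le_mul h1 hg
        (mul_nonneg hqh0.le (mul_nonneg (by linarith) (pow_pos hd 2).le)) hql.le
      linarith [h5]
    · -- x ≥ ρ : use K
      have h5 := mul_le_mul hcase.le hKp
        (mul_nonneg (mul_nonneg (by linarith) (pow_pos hd 2).le) (pow_pos hqh0 2).le)
        (mul_nonneg hql.le hqh0.le)
      have e3 : ql0 * qh * ((qh0 - ql0) * (4 * qh - ql) ^ 2 * qh0 ^ 2)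
          = ql0 * qh0 * (qh0 - ql0) * (4 * qh - ql) ^ 2 * (qh * qh0) := by ring
      have e4 : ql * qh0 * ((qh - ql) * (4 * qh0 - ql0) ^ 2 * qh ^ 2)
          = ql * qh * (qh - ql) * (4 * qh0 - ql0) ^ 2 * (qh * qh0) := by ring
      rw [e3, e4] at h5
      have h6 := le_of_mul_le_mul_right h5 (by positivity : (0:ℝ) < qh * qh0)
      linarith [h6]
  · -- Uh
    unfold Uh
    rw [ge_iff_le, div_le_div_iff₀ (by positivity) (by positivity)]
    linarith [hKp]
end

section
/- Let 0 < q_{l,0} ≤ q_{h,0} ≤ 1, set U_{l,0} = U_l(q_{l,0}, q_{h,0}), U_{h,0} = U_h(q_{l,0}, q_{h,0}), and ρ_0 = q_{l,0}/q_{h,0}. Suppose ρ* ∈ [0, 1] maximizes the function q_l ↦ (U_l(q_l, 1) − U_{l,0})·(U_h(q_l, 1) − U_{h,0}) over the set {q_l ∈ [0, 1] : U_l(q_l, 1) ≥ U_{l,0} and U_h(q_l, 1) ≥ U_{h,0}}, and suppose ρ_0 ≤ ρ*. Then (4 − 5·ρ*)·log₁₀(1/q_{h,0}) ≥ ρ*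 − ρ_0. -/
lemma keyA (r0 r : ℝ) (h0 : 0 ≤ r0) (h1 : r0 ≤ r) (h2 : 7*r ≤ 4) :
    (1-r)*(4-9*r-r^2)*(4-r0)^2 ≤ (1-r0)*(4-7*r-2*r0-r0*r)*(4-r)^2 := by
  have key : (2*r0+r0*r+7*r-4)*(8+r+r0-r0*r) ≤ (1-r)*(2+r)*(4-r0)^2 := by
    nlinarith [sq_nonneg (r-r0), sq_nonneg (4-7*r), mul_nonneg (sub_nonneg.2 h1) (sub_nonneg.2 h2),
      mul_nonneg h0 (sub_nonneg.2 h1), sq_nonneg (4-7*r0), mul_nonneg (sub_nonneg.2 h1) h0]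
  nlinarith [mul_nonneg (sub_nonneg.2 h1) (sub_nonneg.2 key)]

lemma keyG (r0 r : ℝ) (h0 : 0 ≤ r0) (h1 : r0 ≤ r) (h2 : 7*r ≤ 4) :
    0 ≤ 1000*(4-5*r)*(1-r)*(2+r)*(4-r0)^2
      + (4-7*r)*(1000*(4-5*r)*(8+r+r0-r0*r) - 2303*(1-r0)*(4-r)^2) := by
  have hy : (0:ℝ) ≤ r - r0 := sub_nonneg.2 h1
  have hz : (0:ℝ) ≤ 4 - 7*r := by linarith
  nlinarith [mul_nonneg (mul_nonneg (pow_nonneg h0 0) (pow_nonneg hy 0)) (pow_nonneg hz 5), mul_nonneg (mul_nonneg (pow_nonneg h0 0) (pow_nonneg hy 1)) (pow_nonneg hz 4), mul_nonneg (mul_nonneg (pow_nonneg h0 0) (pow_nonneg hy 2)) (pow_nonneg hz 3), mul_nonneg (mul_nonneg (pow_nonneg h0 0) (pow_nonneg hy 3)) (pow_nonneg hz 2), mul_nonneg (mul_nonneg (pow_nonneg h0 0) (pow_nonneg hy 4)) (pow_nonneg hz 1), mul_nonneg (mul_nonneg (pow_nonneg h0 0) (pow_nonneg hy 5)) (pow_nonneg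 hz 0), mul_nonneg (mul_nonneg (pow_nonneg h0 1) (pow_nonneg hy 0)) (pow_nonneg hz 4), mul_nonneg (mul_nonneg (pow_nonneg h0 1) (pow_nonneg hy 1)) (pow_nonneg hz 3), mul_nonneg (mul_nonneg (pow_nonneg h0 1) (pow_nonneg hy 2)) (pow_nonneg hz 2), mul_nonneg (mul_nonneg (pow_nonneg h0 1) (pow_nonneg hy 3)) (pow_nonneg hz 1), mul_nonneg (mul_nonneg (pow_nonneg h0 1) (pow_nonneg hy 4)) (pow_nonneg hz 0), mul_nonneg (mul_nonneg (pow_nonneg h0 2) (pow_nonneg hy 0)) (pow_nonneg hz 3), mul_nonneg (mul_nonneg (pow_nonneg h0 2) (pow_nonneg hy 1)) (pow_nonneg hz 2), mul_nonneg (mul_nonneg (pow_nonneg h0 2) (pow_nonneg hy 2)) (pow_nonneg hz 1), mul_nonneg (mul_nonneg (pow_nonneg h0 2) (pow_nonneg hy 3)) (pow_nonneg hz 0), mul_nonneg (mul_nonneg (pow_nonneg h0 3) (pow_nonneg hy 0)) (pow_nonneg hz 2), mul_nonneg (mul_nonneg (pow_nonneg h0 3) (pow_nonneg hy 1)) (pow_nonneg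 hz 1), mul_nonneg (mul_nonneg (pow_nonneg h0 3) (pow_nonneg hy 2)) (pow_nonneg hz 0), mul_nonneg (mul_nonneg (pow_nonneg h0 4) (pow_nonneg hy 0)) (pow_nonneg hz 1), mul_nonneg (mul_nonneg (pow_nonneg h0 4) (pow_nonneg hy 1)) (pow_nonneg hz 0), mul_nonneg (mul_nonneg (pow_nonneg h0 5) (pow_nonneg hy 0)) (pow_nonneg hz 0)]

lemma keyB (r0 r : ℝ) (h0 : 0 ≤ r0) (h1 : r0 ≤ r) (h2 : 7*r ≤ 4)
    (ht : 0 ≤ 4-7*r-2*r0-r0*r) :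
    2303*(r-r0)*((1-r0)*(4-7*r-2*r0-r0*r)*(4-r)^2)
      ≤ 1000*(4-5*r)*((1-r0)*(4-7*r-2*r0-r0*r)*(4-r)^2 - (1-r)*(4-9*r-r^2)*(4-r0)^2) := by
  have hW : 0 ≤ 1000*(4-5*r)*((4-7*r-2*r0-r0*r)*(8+r+r0-r0*r)+(1-r)*(2+r)*(4-r0)^2)
      - 2303*(1-r0)*(4-7*r-2*r0-r0*r)*(4-r)^2 := by
    have hT3 : 0 ≤ 1000*(4-5*r)*(1-r)*(2+r)*(4-r0)^2 := by
      have a1 : (0:ℝ) ≤ 4-5*r := by linarith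
      have a2 : (0:ℝ) ≤ 1-r := by linarith
      have a3 : (0:ℝ) ≤ 2+r := by linarith
      positivity
    rcases le_or_gt 0 (1000*(4-5*r)*(8+r+r0-r0*r) - 2303*(1-r0)*(4-r)^2) with hC | hC
    · nlinarith [mul_nonneg ht hC]
    · have hG := keyG r0 r h0 h1 h2
      have htz : 4-7*r-2*r0-r0*r ≤ 4 - 7*r := by nlinarith [mul_nonneg h0 (by linarith : (0:ℝ) ≤ 2+r)]
      nlinarith [mul_nonneg (sub_nonneg.2 htz) (le_of_lt (neg_pos.2 hC))]
  nlinarith [mul_nonneg (sub_nonneg.2 h1) hW]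

lemma log_ten_le : Real.log 10 ≤ 2303/1000 := by
  have h2 : Real.log 2 < 0.6931471808 := Real.log_two_lt_d9
  have hpow : Real.log 1024 = 10 * Real.log 2 := by
    rw [show (1024:ℝ) = 2^10 by norm_num, Real.log_pow]; push_cast; ring
  have hsplit : Real.log 1024 = 3 * Real.log 10 + Real.log 1.024 := by
    rw [show (1024:ℝ) = 10^3 * 1.024 by norm_num, Real.log_mul (by positivity) (by norm_num),
      Real.log_pow]; push_cast; ring
  have hlow : (0.0234375:ℝ) ≤ Real.log 1.024 := by
    have := Real.log_le_sub_one_of_pos (show (0:ℝ) < 1/1.024 by norm_num)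
    rw [Real.log_div one_ne_zero (by norm_num), Real.log_one] at this
    norm_num at this ⊢
    linarith
  linarith

lemma foc (c1 c2 r : ℝ) (hr0 : 0 < r) (hr1 : r < 1)
    (hmax : IsLocalMax (fun x : ℝ => (x*(1-x)/(4-x)^2 - c1) * (4*(1-x)/(4-x)^2 - c2)) r) :
    (4-7*r) * (4*(1-r) - c2*(4-r)^2) = (8+4*r) * (r*(1-r) - c1*(4-r)^2) := by
  have hne : (4 - r) ≠ 0 := by intro h; nlinarith [h]
  have hne2 : ((4 - r)^2) ≠ 0 := pow_ne_zero 2 hne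
  have h1 : HasDerivAt (fun x : ℝ => x*(1-x)) (1*(1-r) + r*(0-1)) r :=
    (hasDerivAt_id r).mul ((hasDerivAt_const r (1:ℝ)).sub (hasDerivAt_id r))
  have h2 : HasDerivAt (fun x : ℝ => (4-x)^2) ((2:ℕ)*(4-r)^(2-1)*(0-1)) r :=
    ((hasDerivAt_const r (4:ℝ)).sub (hasDerivAt_id r)).pow 2
  have h3 : HasDerivAt (fun x : ℝ => 4*(1-x)) (0*(1-r) + 4*(0-1)) r :=
    (hasDerivAt_const r (4:ℝ)).mul ((hasDerivAt_const r (1:ℝ)).sub (hasDerivAt_id r))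
  have hN := ((h1.div h2 hne2).sub_const c1).mul ((h3.div h2 hne2).sub_const c2)
  have hd0 := hmax.hasDerivAt_eq_zero hN
  simp only [Pi.div_apply] at hd0
  field_simp at hd0
  have h6 : (4-r)^7 * ((4-7*r) * (4*(1-r) - c2*(4-r)^2) - (8+4*r) * (r*(1-r) - c1*(4-r)^2)) = 0 := by
    linear_combination (4-r)^6 * hd0
  have := (mul_eq_zero.mp h6).resolve_left (pow_ne_zero 7 hne)
  linarith

set_option maxHeartbeats 1000000 in
/-- with maximal quality normalized to `q_h* = 1`, if
`ρ* ∈ [0,1]` maximizes the Nash bargaining objective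
`q_l ↦ (U_l(q_l,1) − U_{l,0})·(U_h(q_l,1) − U_{h,0})` over the feasible set
`{q_l ∈ [0,1] : U_l(q_l,1) ≥ U_{l,0}, U_h(q_l,1) ≥ U_{h,0}}`, and the initial
ratio `ρ_0 = q_{l,0}/q_{h,0}` satisfies `ρ_0 ≤ ρ*`, then
`(4 − 5·ρ*)·log₁₀(1/q_{h,0}) ≥ ρ* − ρ_0`. -/
theorem sufficient_ratio_gain
    (ql0 qh0 ρstar : ℝ)
    (hql0 : 0 < ql0) (h0 : ql0 ≤ qh0) (hqh0 : qh0 ≤ 1)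
    (hmem : ρstar ∈ {ql : ℝ | ql ∈ Set.Icc (0 : ℝ) 1 ∧
      Ul ql 1 ≥ Ul ql0 qh0 ∧ Uh ql 1 ≥ Uh ql0 qh0})
    (hmax : ∀ ql ∈ {ql : ℝ | ql ∈ Set.Icc (0 : ℝ) 1 ∧
      Ul ql 1 ≥ Ul ql0 qh0 ∧ Uh ql 1 ≥ Uh ql0 qh0},
      (Ul ql 1 - Ul ql0 qh0) * (Uh ql 1 - Uh ql0 qh0)
        ≤ (Ul ρstar 1 - Ul ql0 qh0) * (Uh ρstar 1 - Uh ql0 qh0))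
    (hρ : ql0 / qh0 ≤ ρstar) :
    (4 - 5 * ρstar) * Real.logb 10 (1 / qh0) ≥ ρstar - ql0 / qh0 := by

  obtain ⟨⟨hrs0, hrs1⟩, hUlge, hUhge⟩ := hmem
  have hq0 : 0 < qh0 := hql0.trans_le h0
  have hqne : qh0 ≠ 0 := ne_of_gt hq0
  have h4q : 4*qh0 - ql0 ≠ 0 := by intro h; nlinarith
  have hUl0 : Ul ql0 qh0 = qh0 * Ul (ql0/qh0) 1 := by
    simp only [Ul]; field_simp
  have hUh0 : Uh ql0 qh0 = qh0 * Uh (ql0/qh0) 1 := by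
    simp only [Uh]; field_simp
  set ρ0 := ql0 / qh0 with hρ0def
  clear_value ρ0
  have hρ0pos : 0 < ρ0 := by rw [hρ0def]; exact div_pos hql0 hq0
  have hρ0le1 : ρ0 ≤ 1 := by rw [hρ0def]; exact (div_le_one hq0).2 h0
  rcases eq_or_lt_of_le hqh0 with hq1 | hqlt1
  · -- qh0 = 1
    have hlb : Real.logb 10 (1/qh0) = 0 := by rw [hq1]; norm_num
    have key : ρstar ≤ ρ0 := by
      by_contra hc
      push_neg at hc
      have hUhlt : Uh ρstar 1 < Uh ρ0 1 := by
        simp only [Uh]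
        rw [div_lt_div_iff₀ (by nlinarith) (by nlinarith)]
        nlinarith [mul_pos (sub_pos.2 hc) (show (0:ℝ) < 8 + ρstar + ρ0 - ρstar*ρ0 by nlinarith)]
      rw [hUh0, hq1, one_mul] at hUhge
      linarith
    rw [hlb, mul_zero]
    linarith
  · rcases eq_or_lt_of_le h0 with heq | hlt
    · -- ql0 = qh0 : contradiction
      exfalso
      have hUl00 : Ul ql0 qh0 = 0 := by simp only [Ul]; rw [heq]; simp
      have hUh00 : Uh ql0 qh0 = 0 := by simp only [Uh]; rw [heq]; simp
      have hρ01 : ρ0 = 1 := by rw [hρ0def, heq, div_self hqne]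
      have hr1 : ρstar = 1 := le_antisymm hrs1 (by rw [← hρ01]; exact hρ)
      have h12 := hmax (1/2) ⟨⟨by norm_num, by norm_num⟩,
        by rw [hUl00]; norm_num [Ul], by rw [hUh00]; norm_num [Uh]⟩
      rw [hr1, hUl00, hUh00] at h12
      norm_num [Ul, Uh] at h12
    · -- main case
      have hρ0lt1 : ρ0 < 1 := by rw [hρ0def]; exact (div_lt_one hq0).2 hlt
      have hg0 : 0 < Ul ρ0 1 := by
        simp only [Ul]; apply div_pos; nlinarith; nlinarith
      have hf0 : 0 < Uh ρ0 1 := by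
        simp only [Uh]; apply div_pos; nlinarith; nlinarith
      have hN := hmax ρ0 ⟨⟨hρ0pos.le, hρ0le1⟩,
        by rw [hUl0]; nlinarith, by rw [hUh0]; nlinarith⟩
      have hNpos : 0 < (Ul ρstar 1 - Ul ql0 qh0) * (Uh ρstar 1 - Uh ql0 qh0) := by
        refine lt_of_lt_of_le ?_ hN
        rw [hUl0, hUh0]
        have hid : (Ul ρ0 1 - qh0 * Ul ρ0 1) * (Uh ρ0 1 - qh0 * Uh ρ0 1)
            = (1-qh0)^2 * (Ul ρ0 1 * Uh ρ0 1) := by ring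
        rw [hid]
        exact mul_pos (pow_pos (by linarith) 2) (mul_pos hg0 hf0)
      have ha : 0 < Ul ρstar 1 - Ul ql0 qh0 := by
        rcases (sub_nonneg.2 hUlge).lt_or_eq with h | h
        · exact h
        · exfalso; rw [← h, zero_mul] at hNpos; exact lt_irrefl 0 hNpos
      have hb : 0 < Uh ρstar 1 - Uh ql0 qh0 := by
        rcases (sub_nonneg.2 hUhge).lt_or_eq with h | h
        · exact h
        · exfalso; rw [← h, mul_zero] at hNpos; exact lt_irrefl 0 hNpos
      have hUl0pos : 0 < Ul ql0 qh0 := by rw [hUl0]; exact mul_pos hq0 hg0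
      have hUh0pos : 0 < Uh ql0 qh0 := by rw [hUh0]; exact mul_pos hq0 hf0
      have hrpos : 0 < ρstar := by
        rcases hrs0.lt_or_eq with h | h
        · exact h
        · exfalso
          have : Ul ρstar 1 = 0 := by rw [← h]; simp [Ul]
          rw [this] at ha; linarith
      have hrlt1 : ρstar < 1 := by
        rcases hrs1.lt_or_eq with h | h
        · exact h
        · exfalso
          have : Uh ρstar 1 = 0 := by rw [h]; simp [Uh]
          rw [this] at hb; linarith
      have hrne : (4 - ρstar) ≠ 0 := by intro h; nlinarith
      -- continuity
      have hne1 : ((4:ℝ)*1 - ρstar)^2 ≠ 0 := by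
        refine pow_ne_zero 2 ?_
        intro h; norm_num at h; linarith
      have hcont1 : ContinuousAt (fun x : ℝ => Ul x 1) ρstar := by
        have h := ContinuousAt.div (f := fun x : ℝ => x*1*(1-x)) (g := fun x : ℝ => (4*1-x)^2)
          (a := ρstar) (by fun_prop) (by fun_prop) hne1
        rw [Pi.div_def] at h
        simpa only [Ul] using h
      have hcont2 : ContinuousAt (fun x : ℝ => Uh x 1) ρstar := by
        have h := ContinuousAt.div (f := fun x : ℝ => 4*(1:ℝ)^2*(1-x)) (g := fun x : ℝ => (4*1-x)^2)
          (a := ρstar) (by fun_prop) (by fun_prop) hne1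
        rw [Pi.div_def] at h
        simpa only [Uh] using h
      have hev1 : ∀ᶠ x in nhds ρstar, Ul ql0 qh0 < Ul x 1 :=
        hcont1.eventually (eventually_gt_nhds (by linarith))
      have hev2 : ∀ᶠ x in nhds ρstar, Uh ql0 qh0 < Uh x 1 :=
        hcont2.eventually (eventually_gt_nhds (by linarith))
      have hev3 : ∀ᶠ x in nhds ρstar, 0 < x ∧ x < 1 := by
        filter_upwards [Ioo_mem_nhds hrpos hrlt1] with x hx
        exact ⟨hx.1, hx.2⟩
      have hloc : IsLocalMax (fun x : ℝ => (Ul x 1 - Ul ql0 qh0) * (Uh x 1 - Uh ql0 qh0)) ρstar := by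
        filter_upwards [hev1, hev2, hev3] with x hx1 hx2 hx3
        exact hmax x ⟨⟨hx3.1.le, hx3.2.le⟩, hx1.le, hx2.le⟩
      have hfun : (fun x : ℝ => (Ul x 1 - Ul ql0 qh0) * (Uh x 1 - Uh ql0 qh0))
          = fun x : ℝ => (x*(1-x)/(4-x)^2 - Ul ql0 qh0) * (4*(1-x)/(4-x)^2 - Uh ql0 qh0) := by
        funext x; simp only [Ul, Uh]; norm_num
      rw [hfun] at hloc
      have hFOC := foc (Ul ql0 qh0) (Uh ql0 qh0) ρstar hrpos hrlt1 hloc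
      have hUlr : Ul ρstar 1 = ρstar*(1-ρstar)/(4-ρstar)^2 := by
        simp only [Ul, mul_one]
      have hUhr : Uh ρstar 1 = 4*(1-ρstar)/(4-ρstar)^2 := by
        simp only [Uh, mul_one, one_pow]
      have hUl0r : Ul ρ0 1 = ρ0*(1-ρ0)/(4-ρ0)^2 := by
        simp only [Ul, mul_one]
      have hUh0r : Uh ρ0 1 = 4*(1-ρ0)/(4-ρ0)^2 := by
        simp only [Uh, mul_one, one_pow]
      have ha' : 0 < ρstar*(1-ρstar) - Ul ql0 qh0*(4-ρstar)^2 := by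
        have hid : ρstar*(1-ρstar) - Ul ql0 qh0*(4-ρstar)^2
            = (4-ρstar)^2 * (Ul ρstar 1 - Ul ql0 qh0) := by
          rw [hUlr]; field_simp
        rw [hid]; exact mul_pos (by positivity) ha
      have hb' : 0 < 4*(1-ρstar) - Uh ql0 qh0*(4-ρstar)^2 := by
        have hid : 4*(1-ρstar) - Uh ql0 qh0*(4-ρstar)^2
            = (4-ρstar)^2 * (Uh ρstar 1 - Uh ql0 qh0) := by
          rw [hUhr]; field_simp
        rw [hid]; exact mul_pos (by positivity) hb
      have h7 : 7*ρstar < 4 := by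
        by_contra hc
        push_neg at hc
        linarith [hFOC, mul_pos (show (0:ℝ) < 8+4*ρstar by linarith) ha',
          mul_nonneg (by linarith : (0:ℝ) ≤ 7*ρstar - 4) hb'.le]
      have hρ0ne : (4 - ρ0) ≠ 0 := by intro h; nlinarith
      have heq : (1-ρstar)*(4-9*ρstar-ρstar^2)*(4-ρ0)^2
          = qh0*((1-ρ0)*(4-7*ρstar-2*ρ0-ρ0*ρstar)*(4-ρstar)^2) := by
        rw [hUl0, hUh0, hUl0r, hUh0r] at hFOC
        field_simp at hFOC
        linear_combination hFOC/4
      rcases le_or_gt ((1-ρ0)*(4-7*ρstar-2*ρ0-ρ0*ρstar)*(4-ρstar)^2) 0 with hE0 | hE0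
      · -- degenerate: forces ρstar = ρ0
        have hA := keyA ρ0 ρstar hρ0pos.le hρ h7.le
        have hE00 : (1-ρ0)*(4-7*ρstar-2*ρ0-ρ0*ρstar)*(4-ρstar)^2 = 0 := by
          rcases hE0.lt_or_eq with hlt' | hEq
          · exfalso
            have h2 := mul_neg_of_pos_of_neg (show (0:ℝ) < 1 - qh0 by linarith) hlt'
            linarith [hA, heq, h2]
          · exact hEq
        have hEs0 : (1-ρstar)*(4-9*ρstar-ρstar^2)*(4-ρ0)^2 = 0 := by
          rw [heq, hE00, mul_zero]
        have ht0 : 4-7*ρstar-2*ρ0-ρ0*ρstar = 0 := by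
          by_contra hc
          exact (mul_ne_zero (mul_ne_zero (by intro h; linarith) hc) (pow_ne_zero 2 hrne)) hE00
        have hu0 : 4-9*ρstar-ρstar^2 = 0 := by
          by_contra hc
          exact (mul_ne_zero (mul_ne_zero (by intro h; linarith) hc) (pow_ne_zero 2 hρ0ne)) hEs0
        have hreq : ρ0 = ρstar := by
          have hz : (2+ρstar)*(ρ0-ρstar) = 0 := by linear_combination hu0 - ht0
          rcases mul_eq_zero.mp hz with h | h
          · exfalso; linarith
          · linarith [sub_eq_zero.mp h]
        have hlogb : 0 ≤ Real.logb 10 (1/qh0) :=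
          Real.logb_nonneg (by norm_num) (by rw [le_div_iff₀ hq0]; linarith)
        linarith [mul_nonneg (by linarith : (0:ℝ) ≤ 4-5*ρstar) hlogb]
      · -- main branch
        have hEspos : 0 < (1-ρstar)*(4-9*ρstar-ρstar^2)*(4-ρ0)^2 := by
          rw [heq]; exact mul_pos hq0 hE0
        have htpos : 0 ≤ 4-7*ρstar-2*ρ0-ρ0*ρstar := by
          by_contra hc
          push_neg at hc
          linarith [mul_pos (mul_pos (show (0:ℝ) < 1-ρ0 by linarith) (neg_pos.2 hc))
            (show (0:ℝ) < (4-ρstar)^2 by positivity)]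
        have hKB := keyB ρ0 ρstar hρ0pos.le hρ h7.le htpos
        rw [heq] at hKB
        have hmain : 2303*(ρstar - ρ0) ≤ 1000*((4-5*ρstar)*(1-qh0)) := by
          have := le_of_mul_le_mul_right
            (show (2303*(ρstar - ρ0)) * ((1-ρ0)*(4-7*ρstar-2*ρ0-ρ0*ρstar)*(4-ρstar)^2)
                ≤ (1000*((4-5*ρstar)*(1-qh0))) * ((1-ρ0)*(4-7*ρstar-2*ρ0-ρ0*ρstar)*(4-ρstar)^2)
              by linarith [hKB]) hE0
          exact this
        have hL : 1 - qh0 ≤ Real.log (1/qh0) := by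
          have := Real.log_le_sub_one_of_pos hq0
          rw [one_div, Real.log_inv]; linarith
        have hL0 : 0 ≤ Real.log (1/qh0) := by linarith
        have hlt10 : 0 < Real.log 10 := Real.log_pos (by norm_num)
        have hchain : (4-5*ρstar)*((1-qh0)/(2303/1000))
            ≤ (4-5*ρstar)*(Real.log (1/qh0)/Real.log 10) := by
          apply mul_le_mul_of_nonneg_left _ (by linarith : (0:ℝ) ≤ 4-5*ρstar)
          exact div_le_div₀ hL0 hL hlt10 log_ten_le
        rw [ge_iff_le, Real.logb]
        linarith [hchain, hmain]
end
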